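/- For any finite sequence of positive integers (a_1,...,a_n) and any subset of indices n_1 < ... < n_t in {1,...,n}, the continuant satisfies q_n(a_1,...,a_n) ≤ q_{n−t}(ā) · ∏_{i=1}^t (a_{n_i} + 1), where ā is the sequence obtained by deleting the entries at indices n_1,...,n_t. -/

import Mathlib

/-- The continuant of a finite sequence of partial quotients:
`K [] = 1`, `K [a] = a`, `K (a :: b :: t) = a * K (b :: t) + K t`. -/
def contL : List ℕ → ℕ
  | [] => 1
  | [a] => a
  | a :: b :: t => a * contL (b :: t) + contL t

/-- Deleting the entries of `l` at the indices in `s`. -/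
def deleteAt (l : List ℕ) (s : Finset (Fin l.length)) : List ℕ :=
  ((List.finRange l.length).filter (fun i => i ∉ s)).map l.get

lemma contL_pos (l : List ℕ) (hl : ∀ a ∈ l, 1 ≤ a) : 1 ≤ contL l := by
  induction l with
  | nil => simp [contL]
  | cons a t ih =>
    match t with
    | [] => exact hl a (by simp)
    | b :: t' =>
      have h1 : 1 ≤ a := hl a (by simp)
      have h2 : 1 ≤ contL (b :: t') := ih (fun x hx => hl x (by simp [hx]))
      calc 1 ≤ a * contL (b :: t') := Nat.one_le_iff_ne_zero.mpr (by positivity)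
        _ ≤ _ := Nat.le_add_right _ _

lemma contL_le_cons (a : ℕ) (t : List ℕ) (ha : 1 ≤ a) : contL t ≤ contL (a :: t) := by
  match t with
  | [] => simpa [contL] using ha
  | b :: w =>
    show contL (b :: w) ≤ a * contL (b :: w) + contL w
    calc contL (b :: w) = 1 * contL (b :: w) := (one_mul _).symm
      _ ≤ a * contL (b :: w) := Nat.mul_le_mul_right _ ha
      _ ≤ _ := Nat.le_add_right _ _

lemma contL_split (u : List ℕ) (b : ℕ) (v : List ℕ) (hu : u ≠ []) :
    contL (u ++ b :: v) = contL u * contL (b :: v) + contL u.dropLast * contL v := by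
  suffices H : ∀ n (u : List ℕ), u.length ≤ n → u ≠ [] → ∀ b v,
      contL (u ++ b :: v) = contL u * contL (b :: v) + contL u.dropLast * contL v from
    H u.length u le_rfl hu b v
  intro n
  induction n with
  | zero => intro u hu h; simp at hu; simp [hu] at h
  | succ n ih =>
    intro u hlen hne b v
    match u with
    | [a] => simp [contL]
    | [a, c] => simp [contL]; ring
    | a :: c :: d :: u' =>
      have h1 := ih (c :: d :: u') (by simpa using Nat.le_of_succ_le_succ hlen) (by simp) b v
      have h2 := ih (d :: u') (by simp at hlen ⊢; omega) (by simp) b v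
      show contL (a :: ((c :: d :: u') ++ b :: v)) = _
      rw [show contL (a :: ((c :: d :: u') ++ b :: v)) =
        a * contL ((c :: d :: u') ++ b :: v) + contL ((d :: u') ++ b :: v) from rfl,
        h1, h2]
      show _ = contL (a :: c :: d :: u') * _ + contL (a :: (c :: d :: u').dropLast) * _
      rw [show contL (a :: c :: d :: u') = a * contL (c :: d :: u') + contL (d :: u') from rfl]
      have hd : (c :: d :: u').dropLast = c :: (d :: u').dropLast := rfl
      rw [hd]
      have hd2 : contL (a :: c :: (d :: u').dropLast)
          = a * contL (c :: (d :: u').dropLast) + contL ((d :: u').dropLast) := by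
        match u' with
        | [] => rfl
        | e :: u'' => rfl
      rw [hd2, ← hd]
      ring

lemma contL_dropLast_le (u : List ℕ) (hu : ∀ a ∈ u, 1 ≤ a) :
    contL u.dropLast ≤ contL u := by
  match u with
  | [] => exact le_rfl
  | [a] => exact contL_pos [a] hu
  | a :: c :: u' =>
    have hne : (a :: c :: u') ≠ [] := by simp
    have hlast : (a :: c :: u').getLast hne ∈ (a :: c :: u') := List.getLast_mem hne
    have hdec : (a :: c :: u') = (a :: c :: u').dropLast ++ [(a :: c :: u').getLast hne] :=
      (List.dropLast_append_getLast hne).symm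
    have hdne : (a :: c :: u').dropLast ≠ [] := by
      cases u' <;> simp [List.dropLast]
    calc contL (a :: c :: u').dropLast
        = contL (a :: c :: u').dropLast * 1 := (mul_one _).symm
      _ ≤ contL (a :: c :: u').dropLast * contL [(a :: c :: u').getLast hne] :=
          Nat.mul_le_mul_left _ (by simpa [contL] using hu _ hlast)
      _ ≤ _ := by
          conv_rhs => rw [hdec]
          rw [contL_split _ _ _ hdne]
          simpa [contL] using Nat.le_add_right _ _

lemma contL_delete_one (u : List ℕ) (a : ℕ) (v : List ℕ)
    (hu : ∀ x ∈ u, 1 ≤ x) (hv : ∀ x ∈ v, 1 ≤ x) :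
    contL (u ++ a :: v) ≤ (a + 1) * contL (u ++ v) := by
  match u, v with
  | [], [] => simp [contL]
  | [], b :: w =>
    have hW : contL w ≤ contL (b :: w) := contL_le_cons b w (hv b (by simp))
    show a * contL (b :: w) + contL w ≤ _
    calc a * contL (b :: w) + contL w ≤ a * contL (b :: w) + contL (b :: w) := by omega
      _ = (a + 1) * contL (b :: w) := by ring
  | c :: u', [] =>
    have hne : (c :: u') ≠ [] := by simp
    rw [contL_split _ _ _ hne]
    have hD : contL (c :: u').dropLast ≤ contL (c :: u') := contL_dropLast_le _ hu
    simp only [List.append_nil, contL]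
    nlinarith
  | c :: u', b :: w =>
    have hne : (c :: u') ≠ [] := by simp
    rw [contL_split _ _ _ hne, contL_split _ _ _ hne]
    have hD : contL (c :: u').dropLast ≤ contL (c :: u') := contL_dropLast_le _ hu
    have hW : contL w ≤ contL (b :: w) := contL_le_cons b w (hv b (by simp))
    have hab : contL (a :: b :: w) = a * contL (b :: w) + contL w := rfl
    rw [hab]
    obtain ⟨e, hU⟩ := Nat.exists_eq_add_of_le hD
    obtain ⟨f, hB⟩ := Nat.exists_eq_add_of_le hW
    rw [hU, hB]
    nlinarith [Nat.zero_le (a * (contL (c :: u').dropLast * contL w)), Nat.zero_le (e * f)]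

lemma deleteAt_cons (a : ℕ) (t : List ℕ) (s : Finset (Fin (a :: t).length)) :
    deleteAt (a :: t) s =
      (if (0 : Fin (t.length + 1)) ∈ s then [] else [a]) ++
        deleteAt t (Finset.univ.filter (fun i : Fin t.length => i.succ ∈ s)) := by
  have key : ((List.finRange t.length).filter
        ((fun i : Fin (t.length + 1) => decide (i ∉ s)) ∘ Fin.succ)).map ((a :: t).get ∘ Fin.succ)
      = deleteAt t (Finset.univ.filter (fun i : Fin t.length => i.succ ∈ s)) := by
    unfold deleteAt
    congr 1
    apply List.filter_congr
    intro i _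
    simp [Function.comp]
  unfold deleteAt
  simp only [List.length_cons, List.finRange_succ, List.filter_cons, List.filter_map,
    List.map_map]
  by_cases h0 : (0 : Fin (t.length + 1)) ∈ s
  · have hd : decide ((0 : Fin (t.length + 1)) ∉ s) = false := by simp [h0]
    rw [hd, if_pos h0]
    simp only [Bool.false_eq_true, if_false, List.map_map, List.nil_append]
    exact key
  · have hd : decide ((0 : Fin (t.length + 1)) ∉ s) = true := by simp [h0]
    rw [hd, if_neg h0]
    simp only [if_true, List.map_cons, List.map_map]
    rw [key]
    rfl

lemma prod_fin_succ_subset (n : ℕ) (s : Finset (Fin (n + 1))) (f : Fin (n + 1) → ℕ) :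
    ∏ i ∈ s, f i = (if 0 ∈ s then f 0 else 1) *
      ∏ i ∈ Finset.univ.filter (fun i : Fin n => i.succ ∈ s), f i.succ := by
  classical
  rw [← Finset.univ_inter s, ← Finset.prod_ite_mem, Fin.prod_univ_succ, Finset.prod_filter]
  simp

lemma prod_cons_subset (a : ℕ) (t : List ℕ) (s : Finset (Fin (a :: t).length))
    (f : Fin (a :: t).length → ℕ) :
    ∏ i ∈ s, f i = (if (0 : Fin (t.length + 1)) ∈ s then f (0 : Fin (t.length + 1)) else 1) *
      ∏ i ∈ Finset.univ.filter (fun i : Fin t.length => i.succ ∈ s), f i.succ :=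
  prod_fin_succ_subset t.length s f

lemma contL_deleteAt (t : List ℕ) : ∀ (u : List ℕ), (∀ x ∈ u, 1 ≤ x) → (∀ x ∈ t, 1 ≤ x) →
    ∀ s : Finset (Fin t.length),
    contL (u ++ t) ≤ contL (u ++ deleteAt t s) * ∏ i ∈ s, (t.get i + 1) := by
  induction t with
  | nil =>
    intro u hu _ s
    have hs : s = ∅ := Finset.eq_empty_of_forall_notMem (fun i => i.elim0)
    subst hs
    simp [deleteAt]
  | cons a t ih =>
    intro u hu ht s
    have ht' : ∀ x ∈ t, 1 ≤ x := fun x hx => ht x (by simp [hx])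
    have ha : 1 ≤ a := ht a (by simp)
    rw [deleteAt_cons, prod_cons_subset a t s (fun i => (a :: t).get i + 1)]
    set s' : Finset (Fin t.length) := Finset.univ.filter (fun i : Fin t.length => i.succ ∈ s)
      with hs'
    have hprod : ∏ i ∈ s', ((a :: t).get i.succ + 1) = ∏ i ∈ s', (t.get i + 1) :=
      Finset.prod_congr rfl (fun i _ => rfl)
    by_cases h0 : (0 : Fin (t.length + 1)) ∈ s
    · rw [if_pos h0, if_pos h0, List.nil_append, hprod]
      have h1 : contL (u ++ a :: t) ≤ (a + 1) * contL (u ++ t) :=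
        contL_delete_one u a t hu ht'
      have h2 := ih u hu ht' s'
      calc contL (u ++ a :: t) ≤ (a + 1) * contL (u ++ t) := h1
        _ ≤ (a + 1) * (contL (u ++ deleteAt t s') * ∏ i ∈ s', (t.get i + 1)) :=
            Nat.mul_le_mul_left _ h2
        _ = contL (u ++ deleteAt t s') * (((a :: t).get (0 : Fin (t.length + 1)) + 1) * ∏ i ∈ s', (t.get i + 1)) := by
            rw [show (a :: t).get (0 : Fin (t.length + 1)) = a from rfl]; ring
    · rw [if_neg h0, if_neg h0, hprod, one_mul]
      have h2 := ih (u ++ [a]) (by intro x hx; rcases List.mem_append.1 hx with h | h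
                                   · exact hu x h
                                   · simp at h; omega) ht' s'
      calc contL (u ++ a :: t) = contL ((u ++ [a]) ++ t) := by rw [List.append_assoc]; rfl
        _ ≤ contL ((u ++ [a]) ++ deleteAt t s') * ∏ i ∈ s', (t.get i + 1) := h2
        _ = contL (u ++ [a] ++ deleteAt t s') * ∏ i ∈ s', (t.get i + 1) := rfl
        _ = contL (u ++ ([a] ++ deleteAt t s')) * ∏ i ∈ s', (t.get i + 1) := by
            rw [List.append_assoc]

theorem stmt_16 (l : List ℕ) (hl : ∀ a ∈ l, 1 ≤ a) (s : Finset (Fin l.length)) :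
    contL l ≤ contL (deleteAt l s) * ∏ i ∈ s, (l.get i + 1) := by
  simpa using contL_deleteAt l [] (by simp) hl s
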